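/- Let 0 < ϱ < 1, and let Φ, w : [0,∞) → ℝ be measurable with ϱ ≤ e^{Φ(y)} ≤ ϱ⁻¹ and w(y) ≥ ϱ for ν-a.e. y, and ∫ w(y)y² dν(y) < ∞. Then for every u ≥ 0, G̃(u,w,Φ) ≥ ϱλσ_Y²·u² − 2u·(ϱλb_Y − (b+λb_Y)) + ϱλ − λϱ⁻¹. In particular there is a constant c₃ > 0 depending only on ϱ, λ, b, b_Y, σ_Y such that G̃(u,w,Φ) > 0 for all u > c₃; since G̃(0,w,Φ) = 0, it follows that inf_{u≥0} G̃(u,w,Φ) = inf_{0≤u≤c₃} G̃(u,w,Φ). -/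

import Mathlib

open MeasureTheory Real Set

/-- `G̃(u,w,Φ) := ∫ [e^{Φ(y)}·(((1−uy)⁺)² − 1) + w(y)·((1−uy)⁻)²] λ dν(y) + 2u(b+λb_Y)`. -/
noncomputable def Gt (ν : Measure ℝ) (lam b : ℝ) (w Φ : ℝ → ℝ) (u : ℝ) : ℝ :=
  lam * ∫ y, (Real.exp (Φ y) * ((max (1 - u * y) 0) ^ 2 - 1)
      + w y * (max (-(1 - u * y)) 0) ^ 2) ∂ν
    + 2 * u * (b + lam * ∫ y, y ∂ν)

set_option maxHeartbeats 1000000 in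
/-- for `0 < ϱ < 1` there is `c₃ > 0` (depending only on
`ϱ, λ, b, b_Y, σ_Y`) such that for all admissible `Φ, w` (with `ϱ ≤ e^Φ ≤ ϱ⁻¹`, `w ≥ ϱ`
ν-a.e. and `∫ w y² dν < ∞`): for every `u ≥ 0`,
`G̃(u,w,Φ) ≥ ϱλσ_Y²u² − 2u(ϱλb_Y − (b+λb_Y)) + ϱλ − λϱ⁻¹`; `G̃(u,w,Φ) > 0` for `u > c₃`;
`G̃(0,w,Φ) = 0`; and `inf_{u≥0} G̃ = inf_{0≤u≤c₃} G̃`. -/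
theorem stmt9 (ν : Measure ℝ) [IsProbabilityMeasure ν]
    (hν0 : ∀ᵐ y ∂ν, 0 ≤ y)
    (lam b : ℝ) (hlam : 0 < lam) (hb : 0 < b)
    (hy : Integrable (fun y => y) ν)
    (hy2 : Integrable (fun y => y ^ 2) ν)
    (hbY : 0 < ∫ y, y ∂ν) (hσY : 0 < ∫ y, y ^ 2 ∂ν)
    (ϱ : ℝ) (hϱ0 : 0 < ϱ) (hϱ1 : ϱ < 1) :
    ∃ c₃ : ℝ, 0 < c₃ ∧
      ∀ Φ w : ℝ → ℝ, Measurable Φ → Measurable w →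
        (∀ᵐ y ∂ν, ϱ ≤ Real.exp (Φ y) ∧ Real.exp (Φ y) ≤ ϱ⁻¹) →
        (∀ᵐ y ∂ν, ϱ ≤ w y) →
        Integrable (fun y => w y * y ^ 2) ν →
        ((∀ u : ℝ, 0 ≤ u →
            Gt ν lam b w Φ u
              ≥ ϱ * lam * (∫ y, y ^ 2 ∂ν) * u ^ 2
                - 2 * u * (ϱ * lam * (∫ y, y ∂ν) - (b + lam * ∫ y, y ∂ν))
                + ϱ * lam - lam * ϱ⁻¹) ∧
          (∀ u : ℝ, c₃ < u → 0 < Gt ν lam b w Φ u) ∧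
          Gt ν lam b w Φ 0 = 0 ∧
          sInf (Gt ν lam b w Φ '' Set.Ici 0) = sInf (Gt ν lam b w Φ '' Set.Icc 0 c₃)) := by
  have hϱinv : (0:ℝ) < ϱ⁻¹ := by positivity
  have hϱlt : ϱ < ϱ⁻¹ := by
    have h1 : ϱ * ϱ⁻¹ = 1 := mul_inv_cancel₀ hϱ0.ne'
    nlinarith
  refine ⟨Real.sqrt ((lam * ϱ⁻¹ - ϱ * lam) / (ϱ * lam * (∫ y, y ^ 2 ∂ν))) + 1,
    by positivity, ?_⟩
  intro Φ w hΦm hwm hΦb hwb hw2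
  -- key quadratic lower bound
  have key : ∀ u : ℝ, 0 ≤ u →
      Gt ν lam b w Φ u
        ≥ ϱ * lam * (∫ y, y ^ 2 ∂ν) * u ^ 2
            - 2 * u * (ϱ * lam * (∫ y, y ∂ν) - (b + lam * ∫ y, y ∂ν))
            + ϱ * lam - lam * ϱ⁻¹ := by
    intro u hu
    have hmax1 : Measurable fun y : ℝ => max (1 - u * y) 0 :=
      (measurable_const.sub (measurable_id.const_mul u)).max measurable_const
    have hmax2 : Measurable fun y : ℝ => max (-(1 - u * y)) 0 :=
      (measurable_const.sub (measurable_id.const_mul u)).neg.max measurable_const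
    have hint1 : Integrable (fun y => Real.exp (Φ y) * ((max (1 - u * y) 0) ^ 2 - 1)) ν := by
      refine Integrable.mono' (integrable_const ϱ⁻¹) ?_ ?_
      · exact (hΦm.exp.mul ((hmax1.pow_const 2).sub measurable_const)).aestronglyMeasurable
      · filter_upwards [hν0, hΦb] with y hy0 hΦy
        rw [Real.norm_eq_abs, abs_mul, abs_of_nonneg (Real.exp_pos _).le]
        have h1 : max (1 - u * y) 0 ≤ 1 := by
          apply max_le _ zero_le_one; nlinarith [mul_nonneg hu hy0]
        have h2 : (0:ℝ) ≤ max (1 - u * y) 0 := le_max_right _ _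
        have h3 : |(max (1 - u * y) 0) ^ 2 - 1| ≤ 1 := by
          rw [abs_le]; constructor <;> nlinarith
        calc Real.exp (Φ y) * |(max (1 - u * y) 0) ^ 2 - 1| ≤ ϱ⁻¹ * 1 :=
              mul_le_mul hΦy.2 h3 (abs_nonneg _) hϱinv.le
          _ = ϱ⁻¹ := mul_one _
    have hint2 : Integrable (fun y => w y * (max (-(1 - u * y)) 0) ^ 2) ν := by
      refine Integrable.mono' (hw2.const_mul (u ^ 2)) ?_ ?_
      · exact (hwm.mul (hmax2.pow_const 2)).aestronglyMeasurable
      · filter_upwards [hν0, hwb] with y hy0 hwy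
        have hw0 : 0 ≤ w y := le_trans hϱ0.le hwy
        have hm0 : (0:ℝ) ≤ max (-(1 - u * y)) 0 := le_max_right _ _
        have hm1 : max (-(1 - u * y)) 0 ≤ u * y := by
          apply max_le _ (mul_nonneg hu hy0); nlinarith
        rw [Real.norm_eq_abs, abs_of_nonneg (by positivity)]
        calc w y * (max (-(1 - u * y)) 0) ^ 2 ≤ w y * (u * y) ^ 2 := by
              apply mul_le_mul_of_nonneg_left _ hw0
              exact pow_le_pow_left₀ hm0 hm1 2
          _ = u ^ 2 * (w y * y ^ 2) := by ring
    have hhint : Integrable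
        (fun y => (ϱ - ϱ⁻¹) + (-(2 * ϱ * u)) * y + (ϱ * u ^ 2) * y ^ 2) ν :=
      ((integrable_const _).add (hy.const_mul _)).add (hy2.const_mul _)
    have hpt : (fun y => (ϱ - ϱ⁻¹) + (-(2 * ϱ * u)) * y + (ϱ * u ^ 2) * y ^ 2)
        ≤ᵐ[ν] (fun y => Real.exp (Φ y) * ((max (1 - u * y) 0) ^ 2 - 1)
            + w y * (max (-(1 - u * y)) 0) ^ 2) := by
      filter_upwards [hν0, hΦb, hwb] with y hy0 hΦy hwy
      set p := max (1 - u * y) 0 with hp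
      set m := max (-(1 - u * y)) 0 with hm
      have hp0 : 0 ≤ p := le_max_right _ _
      have hm0 : 0 ≤ m := le_max_right _ _
      have hsq : p ^ 2 + m ^ 2 = (1 - u * y) ^ 2 := by
        rcases le_total (1 - u * y) 0 with h | h
        · rw [hp, hm, max_eq_right h, max_eq_left (by linarith)]; ring
        · rw [hp, hm, max_eq_left h, max_eq_right (by linarith)]; ring
      nlinarith [mul_le_mul_of_nonneg_right hΦy.1 (sq_nonneg p),
        mul_le_mul_of_nonneg_right hwy (sq_nonneg m), hΦy.2, sq_nonneg p, sq_nonneg m]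
    have hintlin : Integrable (fun y : ℝ => (ϱ - ϱ⁻¹) + (-(2 * ϱ * u)) * y) ν :=
      (integrable_const _).add (hy.const_mul _)
    have hIle : (∫ y, ((ϱ - ϱ⁻¹) + (-(2 * ϱ * u)) * y + (ϱ * u ^ 2) * y ^ 2) ∂ν)
        ≤ ∫ y, (Real.exp (Φ y) * ((max (1 - u * y) 0) ^ 2 - 1)
            + w y * (max (-(1 - u * y)) 0) ^ 2) ∂ν :=
      integral_mono_ae hhint (hint1.add hint2) hpt
    have e1 : ∫ y, ((ϱ - ϱ⁻¹) + (-(2 * ϱ * u)) * y + (ϱ * u ^ 2) * y ^ 2) ∂ν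
        = (∫ y, ((ϱ - ϱ⁻¹) + (-(2 * ϱ * u)) * y) ∂ν) + ∫ y, (ϱ * u ^ 2) * y ^ 2 ∂ν :=
      integral_add hintlin (hy2.const_mul _)
    have e2 : ∫ y, ((ϱ - ϱ⁻¹) + (-(2 * ϱ * u)) * y) ∂ν
        = (∫ y, (ϱ - ϱ⁻¹ : ℝ) ∂ν) + ∫ y, (-(2 * ϱ * u)) * y ∂ν :=
      integral_add (integrable_const _) (hy.const_mul _)
    have hIh : ∫ y, ((ϱ - ϱ⁻¹) + (-(2 * ϱ * u)) * y + (ϱ * u ^ 2) * y ^ 2) ∂ν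
        = (ϱ - ϱ⁻¹) + (-(2 * ϱ * u)) * (∫ y, y ∂ν) + (ϱ * u ^ 2) * (∫ y, y ^ 2 ∂ν) := by
      rw [e1, e2, integral_const, integral_const_mul, integral_const_mul]
      simp
    rw [hIh] at hIle
    rw [Gt, ge_iff_le]
    have hml := mul_le_mul_of_nonneg_left hIle hlam.le
    nlinarith [hml]
  have hB : ϱ * lam * (∫ y, y ∂ν) - (b + lam * ∫ y, y ∂ν) < 0 := by
    nlinarith [mul_pos hlam hbY]
  have hA : (0:ℝ) < ϱ * lam * (∫ y, y ^ 2 ∂ν) := by positivity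
  have hD0 : (0:ℝ) ≤ (lam * ϱ⁻¹ - ϱ * lam) / (ϱ * lam * (∫ y, y ^ 2 ∂ν)) :=
    div_nonneg (by nlinarith) hA.le
  have hpos : ∀ u : ℝ,
      Real.sqrt ((lam * ϱ⁻¹ - ϱ * lam) / (ϱ * lam * (∫ y, y ^ 2 ∂ν))) + 1 < u →
      0 < Gt ν lam b w Φ u := by
    intro u hu
    have hs0 : (0:ℝ) ≤ Real.sqrt ((lam * ϱ⁻¹ - ϱ * lam) / (ϱ * lam * (∫ y, y ^ 2 ∂ν))) :=
      Real.sqrt_nonneg _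
    have hu0 : (0:ℝ) < u := by linarith
    have hK := key u hu0.le
    have hu2 : (lam * ϱ⁻¹ - ϱ * lam) / (ϱ * lam * (∫ y, y ^ 2 ∂ν)) < u ^ 2 := by
      have := Real.sq_sqrt hD0
      nlinarith
    have hAu : lam * ϱ⁻¹ - ϱ * lam < ϱ * lam * (∫ y, y ^ 2 ∂ν) * u ^ 2 := by
      have := (div_lt_iff₀ hA).mp hu2
      linarith
    nlinarith [mul_pos hu0 (neg_pos.mpr hB)]
  have h0 : Gt ν lam b w Φ 0 = 0 := by
    have hfun : (fun y => Real.exp (Φ y) * ((max (1 - 0 * y) 0) ^ 2 - 1)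
        + w y * (max (-(1 - 0 * y)) 0) ^ 2) = fun _ : ℝ => (0:ℝ) := by
      funext y
      rw [show (1:ℝ) - 0 * y = 1 by ring, max_eq_left zero_le_one,
        max_eq_right (by norm_num : (-(1:ℝ)) ≤ 0)]
      ring
    rw [Gt, hfun]
    simp
  refine ⟨key, hpos, h0, ?_⟩
  set c₃ := Real.sqrt ((lam * ϱ⁻¹ - ϱ * lam) / (ϱ * lam * (∫ y, y ^ 2 ∂ν))) + 1 with hc3
  have hc₃0 : 0 < c₃ := by positivity
  have hlb : ∀ u ∈ Ici (0:ℝ), ϱ * lam - lam * ϱ⁻¹ ≤ Gt ν lam b w Φ u := by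
    intro u hu
    have hK := key u hu
    have hu' : (0:ℝ) ≤ u := hu
    nlinarith [mul_nonneg hu' (neg_pos.mpr hB).le, mul_nonneg hA.le (sq_nonneg u)]
  have hbdd : BddBelow (Gt ν lam b w Φ '' Ici 0) := by
    refine ⟨ϱ * lam - lam * ϱ⁻¹, ?_⟩
    rintro x ⟨u, hu, rfl⟩
    exact hlb u hu
  have hbddIcc : BddBelow (Gt ν lam b w Φ '' Icc 0 c₃) :=
    hbdd.mono (image_mono Icc_subset_Ici_self)
  have hmem0 : Gt ν lam b w Φ 0 ∈ Gt ν lam b w Φ '' Icc 0 c₃ :=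
    mem_image_of_mem _ ⟨le_refl 0, hc₃0.le⟩
  have hne : (Gt ν lam b w Φ '' Icc 0 c₃).Nonempty := ⟨_, hmem0⟩
  have h1 : sInf (Gt ν lam b w Φ '' Ici 0) ≤ sInf (Gt ν lam b w Φ '' Icc 0 c₃) :=
    csInf_le_csInf hbdd hne (image_mono Icc_subset_Ici_self)
  have h2 : sInf (Gt ν lam b w Φ '' Icc 0 c₃) ≤ sInf (Gt ν lam b w Φ '' Ici 0) := by
    apply le_csInf ⟨Gt ν lam b w Φ 0, mem_image_of_mem _ (self_mem_Ici (a := (0:ℝ)))⟩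
    rintro x ⟨u, hu, rfl⟩
    rcases le_or_gt u c₃ with h | h
    · exact csInf_le hbddIcc (mem_image_of_mem _ ⟨hu, h⟩)
    · have hGu := hpos u h
      have hle0 : sInf (Gt ν lam b w Φ '' Icc 0 c₃) ≤ 0 := by
        have := csInf_le hbddIcc hmem0
        rwa [h0] at this
      linarith
  linarith
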